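/- Let η: [0,∞) → ℝ with η(t) = 1 for t ∈ [0,τ], 0 ≤ η ≤ 1, and η strictly decreasing on [τ,1], for some 0 < τ < 1. Define A^{(N)}_{k,r} = I_r − η(k/N) (I_r − M^{(N)}_{k,r}), where M^{(N)}_{k,r} = I_r − N^{-1}B^{(N)}_{k,r}. If 0 ≤ k, r ≤ N−1 and k + r < N, then A^{(N)}_{k,r} is positive definite and all its eigenvalues lie in (0,1]. -/

import Mathlib

open Real

/-- Chebyshev polynomial of the second kind, evaluated at a real number. -/
noncomputable def chebU (k : ℕ) (x : ℝ) : ℝ := (Polynomial.Chebyshev.U ℝ (k : ℤ)).eval x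

/-- The matrix `B^{(N)}_{k,r}` with entries `U_k(cos(φ_μ - φ_ν))`, `φ_ν = 2πν/N`. -/
noncomputable def Bmat (N k r : ℕ) : Matrix (Fin r) (Fin r) ℝ :=
  fun μ ν => chebU k (Real.cos (2 * π * ((μ : ℝ) - (ν : ℝ)) / N))

/-- The matrix `M^{(N)}_{k,r} = I_r - N⁻¹ B^{(N)}_{k,r}`. -/
noncomputable def Mmat (N k r : ℕ) : Matrix (Fin r) (Fin r) ℝ :=
  1 - (N : ℝ)⁻¹ • Bmat N k r

/-- The matrix `A^{(N)}_{k,r} = I_r - η(k/N)(I_r - M^{(N)}_{k,r}) = I_r - η(k/N) N⁻¹ B^{(N)}_{k,r}`. -/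
noncomputable def Amat (η : ℝ → ℝ) (N k r : ℕ) : Matrix (Fin r) (Fin r) ℝ :=
  1 - η ((k : ℝ) / N) • (1 - Mmat N k r)

lemma chebU_cos_sum (k : ℕ) (θ : ℝ) :
    chebU k (Real.cos θ) = ∑ j ∈ Finset.range (k+1), Real.cos (((k:ℝ) - 2*j) * θ) := by
  induction k using Nat.strong_induction_on with
  | _ k ih =>
    match k with
    | 0 => simp [chebU, Polynomial.Chebyshev.U_zero]
    | 1 =>
      rw [Finset.sum_range_succ, Finset.sum_range_one]
      have h1 : chebU 1 (Real.cos θ) = 2 * Real.cos θ := by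
        simp [chebU, Polynomial.Chebyshev.U_one]
      rw [h1]
      push_cast
      rw [show ((1:ℝ) - 2*0) * θ = 1 * θ by ring, show ((1:ℝ) - 2*1) * θ = -(1 * θ) by ring,
        Real.cos_neg]
      ring
    | (m+2) =>
      have h1 := ih (m+1) (by omega)
      have h0 := ih m (by omega)
      have hrec : chebU (m+2) (Real.cos θ)
          = 2 * Real.cos θ * chebU (m+1) (Real.cos θ) - chebU m (Real.cos θ) := by
        have hU := Polynomial.Chebyshev.U_add_two ℝ (m:ℤ)
        unfold chebU
        rw [show ((m+2:ℕ):ℤ) = (m:ℤ)+2 by push_cast; ring, hU,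
          show ((m+1:ℕ):ℤ) = (m:ℤ)+1 by push_cast; ring]
        simp [Polynomial.eval_mul]
      rw [hrec, h1, h0]
      have hprod : ∀ j : ℕ, 2 * Real.cos θ * Real.cos (((m:ℝ)+1-2*j) * θ)
          = Real.cos (((m:ℝ)+2-2*j) * θ) + Real.cos (((m:ℝ)-2*j) * θ) := by
        intro j
        rw [show ((m:ℝ)+2-2*j)*θ = ((m:ℝ)+1-2*j)*θ + θ by ring,
          show ((m:ℝ)-2*j)*θ = ((m:ℝ)+1-2*j)*θ - θ by ring,
          Real.cos_add, Real.cos_sub]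
        ring
      push_cast
      have key : (∑ j ∈ Finset.range (m+3), Real.cos (((m:ℝ)+2 - 2*j) * θ))
          + ∑ j ∈ Finset.range (m+1), Real.cos (((m:ℝ) - 2*j) * θ)
          = 2 * Real.cos θ * ∑ j ∈ Finset.range (m+2), Real.cos (((m:ℝ)+1 - 2*j) * θ) := by
        rw [Finset.mul_sum]
        simp_rw [hprod]
        rw [Finset.sum_add_distrib,
          Finset.sum_range_succ (fun j => Real.cos (((m:ℝ)+2-2*j)*θ)) (m+2),
          Finset.sum_range_succ (fun j => Real.cos (((m:ℝ)-2*j)*θ)) (m+1)]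
        push_cast
        rw [show ((m:ℝ)+2-2*((m:ℝ)+2))*θ = -((((m:ℝ)+2))*θ) by ring,
          show ((m:ℝ)-2*((m:ℝ)+1))*θ = -((((m:ℝ)+2))*θ) by ring, Real.cos_neg]
        ring
      have e2 : ∀ j : ℕ, ((m:ℝ) + 2 - 2*j) = ((m:ℝ) + 1 + 1 - 2*j) := by intro j; ring
      simp_rw [show ((m:ℝ)+1+1) = (m:ℝ)+2 by ring] at *
      linarith [key]

namespace AmatCore

noncomputable def w (N : ℕ) : ℂ := Complex.exp (2 * (π:ℝ) * Complex.I / N)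

variable {N : ℕ} (hN : N ≠ 0)

lemma w_ne_zero : w N ≠ 0 := Complex.exp_ne_zero _


include hN in
lemma w_prim : IsPrimitiveRoot (w N) N := Complex.isPrimitiveRoot_exp N hN

include hN in
lemma w_pow_int_N (t : ℤ) : w N ^ ((N:ℤ) * t) = 1 := by
  rw [zpow_mul, (w_prim hN).zpow_eq_one, one_zpow]

lemma w_conj : (starRingEnd ℂ) (w N) = (w N)⁻¹ := by
  rw [w, ← Complex.exp_conj, ← Complex.exp_neg]
  congr 1
  simp only [map_div₀, map_mul, Complex.conj_I, Complex.conj_ofNat, Complex.conj_ofReal,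
    map_natCast]
  ring

lemma w_zpow_exp (s : ℤ) : w N ^ s = Complex.exp ((s * (2 * π / N) : ℂ) * Complex.I) := by
  rw [w, ← Complex.exp_int_mul]
  congr 1
  push_cast
  ring

lemma w_add_neg (s : ℤ) :
    w N ^ s + w N ^ (-s) = 2 * ((Real.cos ((s:ℝ) * (2 * π / N)) : ℝ) : ℂ) := by
  rw [w_zpow_exp s, w_zpow_exp (-s)]
  rw [show ((-s : ℤ) * (2 * π / N) : ℂ) = -((s:ℤ) * (2 * π / N) : ℂ) by push_cast; ring]
  rw [Complex.exp_mul_I, Complex.exp_mul_I, Complex.cos_neg, Complex.sin_neg]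
  rw [Complex.ofReal_cos]
  push_cast
  ring

variable {r : ℕ} (x : Fin r → ℝ)

noncomputable def F (N : ℕ) (x : Fin r → ℝ) (m : ℤ) : ℂ :=
  ∑ μ : Fin r, (x μ : ℂ) * w N ^ (m * (μ:ℤ))

include hN in
lemma F_periodic (m c : ℤ) : F N x (m + N * c) = F N x m := by
  unfold F
  refine Finset.sum_congr rfl fun μ _ => ?_
  rw [show (m + N*c) * (μ:ℤ) = m * μ + (N:ℤ) * (c * μ) by ring,
    zpow_add₀ (w_ne_zero (N := N)), w_pow_int_N hN, mul_one]

lemma F_quad (m : ℤ) :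
    ((Complex.normSq (F N x m) : ℝ) : ℂ)
      = ∑ μ : Fin r, ∑ ν : Fin r, ((x μ * x ν : ℝ) : ℂ) * w N ^ (m * ((μ:ℤ) - (ν:ℤ))) := by
  rw [← Complex.mul_conj]
  unfold F
  rw [map_sum, Finset.sum_mul_sum]
  refine Finset.sum_congr rfl fun μ _ => Finset.sum_congr rfl fun ν _ => ?_
  rw [map_mul, Complex.conj_ofReal, map_zpow₀, w_conj, inv_zpow, ← zpow_neg,
    mul_mul_mul_comm, ← zpow_add₀ (w_ne_zero (N := N))]
  push_cast
  congr 2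
  ring

lemma geo_zero {n : ℕ} (ζ : ℂ) (hζN : ζ ^ n = 1) (hζ1 : ζ ≠ 1) :
    ∑ i ∈ Finset.range n, ζ ^ i = 0 := by
  rw [geom_sum_eq hζ1, hζN]
  simp

lemma sum_normSq (a c : ℤ) (n : ℕ)
    (H1 : ∀ μ ν : Fin r, μ ≠ ν → (w N) ^ (c * ((μ:ℤ) - (ν:ℤ))) ≠ 1)
    (H2 : ∀ μ ν : Fin r, ((w N) ^ (c * ((μ:ℤ) - (ν:ℤ)))) ^ n = 1) :
    ∑ j ∈ Finset.range n, Complex.normSq (F N x (a + c * j)) = n * ∑ μ, (x μ)^2 := by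
  have main : ∑ j ∈ Finset.range n, ((Complex.normSq (F N x (a + c * j)) : ℝ) : ℂ)
      = ((n * ∑ μ, (x μ)^2 : ℝ) : ℂ) := by
    calc ∑ j ∈ Finset.range n, ((Complex.normSq (F N x (a + c * j)) : ℝ) : ℂ)
        = ∑ j ∈ Finset.range n, ∑ μ : Fin r, ∑ ν : Fin r,
            ((x μ * x ν : ℝ) : ℂ) * (w N ^ (a * ((μ:ℤ) - ν)) * (w N ^ (c * ((μ:ℤ) - ν))) ^ j) := by
          refine Finset.sum_congr rfl fun j _ => ?_
          rw [F_quad]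
          refine Finset.sum_congr rfl fun μ _ => Finset.sum_congr rfl fun ν _ => ?_
          rw [← zpow_natCast (w N ^ (c * ((μ:ℤ) - ν))), ← zpow_mul,
            ← zpow_add₀ (w_ne_zero (N := N))]
          congr 2
          ring
      _ = ∑ μ : Fin r, ∑ ν : Fin r,
            ((x μ * x ν : ℝ) : ℂ) * w N ^ (a * ((μ:ℤ) - ν))
              * ∑ j ∈ Finset.range n, (w N ^ (c * ((μ:ℤ) - ν))) ^ j := by
          rw [Finset.sum_comm]
          refine Finset.sum_congr rfl fun μ _ => ?_
          rw [Finset.sum_comm]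
          refine Finset.sum_congr rfl fun ν _ => ?_
          rw [Finset.mul_sum]
          refine Finset.sum_congr rfl fun j _ => by ring
      _ = ∑ μ : Fin r, ((x μ * x μ : ℝ) : ℂ) * (n:ℂ) := by
          refine Finset.sum_congr rfl fun μ _ => ?_
          rw [Finset.sum_eq_single μ]
          · rw [sub_self, mul_zero, zpow_zero, mul_one]
            simp
          · intro ν _ hν
            rw [geo_zero _ (H2 μ ν) (H1 μ ν (Ne.symm hν)), mul_zero]
          · intro hμ
            exact absurd (Finset.mem_univ μ) hμ
      _ = ((n * ∑ μ, (x μ)^2 : ℝ) : ℂ) := by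
          push_cast
          rw [Finset.mul_sum]
          refine Finset.sum_congr rfl fun μ _ => by ring
  exact_mod_cast main


include hN in
lemma parseval_full (hrN : r ≤ N) :
    ∑ m ∈ Finset.range N, Complex.normSq (F N x (m : ℤ)) = N * ∑ μ, (x μ)^2 := by
  have H1 : ∀ μ ν : Fin r, μ ≠ ν → (w N) ^ ((1:ℤ) * ((μ:ℤ) - (ν:ℤ))) ≠ 1 := by
    intro μ ν hμν hone
    rw [one_mul, (w_prim hN).zpow_eq_one_iff_dvd] at hone
    have habs : |(μ:ℤ) - (ν:ℤ)| < (N:ℤ) := by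
      have h1 : (μ:ℕ) < N := lt_of_lt_of_le μ.isLt hrN
      have h2 : (ν:ℕ) < N := lt_of_lt_of_le ν.isLt hrN
      rw [abs_lt]; omega
    have := Int.eq_zero_of_abs_lt_dvd hone habs
    exact hμν (Fin.ext (by omega))
  have H2 : ∀ μ ν : Fin r, ((w N) ^ ((1:ℤ) * ((μ:ℤ) - (ν:ℤ)))) ^ N = 1 := by
    intro μ ν
    rw [one_mul, ← zpow_natCast, ← zpow_mul, mul_comm, w_pow_int_N hN]
  have := sum_normSq x 0 1 N H1 H2
  simpa using this

lemma parseval_half {n : ℕ} (hN2 : N = 2*n) (hn : n ≠ 0) (hrn : r ≤ n) (k : ℕ) :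
    ∑ j ∈ Finset.range n, Complex.normSq (F N x ((k:ℤ) - 2*j)) = n * ∑ μ, (x μ)^2 := by
  have hN : N ≠ 0 := by omega
  have H1 : ∀ μ ν : Fin r, μ ≠ ν → (w N) ^ ((-2:ℤ) * ((μ:ℤ) - (ν:ℤ))) ≠ 1 := by
    intro μ ν hμν hone
    rw [(w_prim hN).zpow_eq_one_iff_dvd] at hone
    have habs : |(-2:ℤ) * ((μ:ℤ) - (ν:ℤ))| < (N:ℤ) := by
      have h1 : (μ:ℕ) < n := lt_of_lt_of_le μ.isLt hrn
      have h2 : (ν:ℕ) < n := lt_of_lt_of_le ν.isLt hrn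
      rw [abs_lt]; omega
    have := Int.eq_zero_of_abs_lt_dvd hone habs
    exact hμν (Fin.ext (by omega))
  have H2 : ∀ μ ν : Fin r, ((w N) ^ ((-2:ℤ) * ((μ:ℤ) - (ν:ℤ)))) ^ n = 1 := by
    intro μ ν
    rw [← zpow_natCast, ← zpow_mul,
      show (-2:ℤ) * ((μ:ℤ) - (ν:ℤ)) * n = (N:ℤ) * (-((μ:ℤ) - ν)) by push_cast [hN2]; ring,
      w_pow_int_N hN]
  have := sum_normSq x (k:ℤ) (-2) n H1 H2
  simp only [neg_mul, ← sub_eq_add_neg] at this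
  exact this

omit hN in
lemma Bmat_entry (k : ℕ) (μ ν : Fin r) :
    ((Bmat N k r μ ν : ℝ) : ℂ)
      = ∑ j ∈ Finset.range (k+1), w N ^ (((k:ℤ) - 2*j) * ((μ:ℤ) - (ν:ℤ))) := by
  rw [show Bmat N k r μ ν = chebU k (Real.cos (2 * π * ((μ : ℝ) - (ν : ℝ)) / N)) from rfl,
    chebU_cos_sum]
  rw [Complex.ofReal_sum]
  have hterm : ∀ j ∈ Finset.range (k+1),
      ((Real.cos (((k:ℝ) - 2*j) * (2 * π * ((μ : ℝ) - (ν : ℝ)) / N)) : ℝ) : ℂ)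
        = (w N ^ (((k:ℤ) - 2*j) * ((μ:ℤ) - (ν:ℤ)))
            + w N ^ (-(((k:ℤ) - 2*j) * ((μ:ℤ) - (ν:ℤ))))) / 2 := by
    intro j _
    rw [show ((k:ℝ) - 2*j) * (2 * π * ((μ : ℝ) - (ν : ℝ)) / N)
        = ((((k:ℤ) - 2*j) * ((μ:ℤ) - (ν:ℤ)) : ℤ) : ℝ) * (2 * π / N) by push_cast; ring]
    rw [w_add_neg]
    ring
  rw [Finset.sum_congr rfl hterm]
  have hrefl : ∑ j ∈ Finset.range (k+1), w N ^ (-(((k:ℤ) - 2*j) * ((μ:ℤ) - (ν:ℤ))))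
      = ∑ j ∈ Finset.range (k+1), w N ^ (((k:ℤ) - 2*j) * ((μ:ℤ) - (ν:ℤ))) := by
    have := Finset.sum_range_reflect
      (fun j => w N ^ (((k:ℤ) - 2*j) * ((μ:ℤ) - (ν:ℤ)))) (k+1)
    rw [← this]
    refine Finset.sum_congr rfl fun j hj => ?_
    have hj' : j ≤ k := by
      have := Finset.mem_range.mp hj; omega
    congr 1
    have hcast : ((k + 1 - 1 - j : ℕ) : ℤ) = (k:ℤ) - j := by omega
    rw [hcast]
    ring
  rw [← Finset.sum_div, Finset.sum_add_distrib, hrefl]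
  ring

include hN in
lemma QB_eq (k : ℕ) :
    ∑ μ : Fin r, ∑ ν : Fin r, x μ * Bmat N k r μ ν * x ν
      = ∑ j ∈ Finset.range (k+1), Complex.normSq (F N x ((k:ℤ) - 2*j)) := by
  have main : ∑ μ : Fin r, ∑ ν : Fin r, ((x μ * Bmat N k r μ ν * x ν : ℝ) : ℂ)
      = ∑ j ∈ Finset.range (k+1), ((Complex.normSq (F N x ((k:ℤ) - 2*j)) : ℝ) : ℂ) := by
    calc ∑ μ : Fin r, ∑ ν : Fin r, ((x μ * Bmat N k r μ ν * x ν : ℝ) : ℂ)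
        = ∑ μ : Fin r, ∑ ν : Fin r, ∑ j ∈ Finset.range (k+1),
            ((x μ * x ν : ℝ) : ℂ) * w N ^ (((k:ℤ) - 2*j) * ((μ:ℤ) - (ν:ℤ))) := by
          refine Finset.sum_congr rfl fun μ _ => Finset.sum_congr rfl fun ν _ => ?_
          rw [show ((x μ * Bmat N k r μ ν * x ν : ℝ) : ℂ)
            = ((x μ * x ν : ℝ) : ℂ) * ((Bmat N k r μ ν : ℝ) : ℂ) by push_cast; ring]
          rw [Bmat_entry, Finset.mul_sum]
      _ = ∑ μ : Fin r, ∑ j ∈ Finset.range (k+1), ∑ ν : Fin r,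
            ((x μ * x ν : ℝ) : ℂ) * w N ^ (((k:ℤ) - 2*j) * ((μ:ℤ) - (ν:ℤ))) :=
          Finset.sum_congr rfl fun μ _ => Finset.sum_comm
      _ = ∑ j ∈ Finset.range (k+1), ∑ μ : Fin r, ∑ ν : Fin r,
            ((x μ * x ν : ℝ) : ℂ) * w N ^ (((k:ℤ) - 2*j) * ((μ:ℤ) - (ν:ℤ))) :=
          Finset.sum_comm
      _ = ∑ j ∈ Finset.range (k+1), ((Complex.normSq (F N x ((k:ℤ) - 2*j)) : ℝ) : ℂ) :=
          Finset.sum_congr rfl fun j _ => (F_quad x _).symm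
  exact_mod_cast main

lemma exists_F_ne (hN : N ≠ 0) (hx : x ≠ 0) (S : Finset ℕ) (hS : S ⊆ Finset.range N)
    (hcard : r ≤ S.card) : ∃ m ∈ S, F N x (m : ℤ) ≠ 0 := by
  by_contra hcon
  push_neg at hcon
  have hr1 : 0 < r := by
    rcases Nat.eq_zero_or_pos r with h0 | h
    · subst h0; exact absurd (funext fun i => i.elim0) hx
    · exact h
  set p : Polynomial ℂ := ∑ μ : Fin r, Polynomial.C ((x μ : ℝ) : ℂ) * Polynomial.X ^ (μ:ℕ)
    with hp
  have hdeg : p.natDegree < r := by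
    refine lt_of_le_of_lt (Polynomial.natDegree_sum_le_of_forall_le _ _ fun μ _ => ?_)
      (show r - 1 < r by omega)
    exact le_trans (Polynomial.natDegree_C_mul_X_pow_le _ _) (by omega)
  have hevalF : ∀ m : ℕ, p.eval (w N ^ m) = F N x (m : ℤ) := by
    intro m
    rw [hp, Polynomial.eval_finset_sum, F]
    refine Finset.sum_congr rfl fun μ _ => ?_
    rw [Polynomial.eval_mul, Polynomial.eval_C, Polynomial.eval_pow, Polynomial.eval_X,
      ← pow_mul, ← zpow_natCast]
    push_cast
    ring_nf
  set T : Finset ℂ := S.image (fun m => w N ^ m) with hT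
  have hTcard : T.card = S.card := Finset.card_image_of_injOn (fun a ha b hb e =>
    (w_prim hN).pow_inj (Finset.mem_range.mp (hS ha)) (Finset.mem_range.mp (hS hb)) e)
  have hevalT : ∀ z ∈ T, p.eval z = 0 := by
    intro z hz
    obtain ⟨m, hm, rfl⟩ := Finset.mem_image.mp hz
    rw [hevalF m]
    exact hcon m hm
  have hp0 : p = 0 :=
    Polynomial.eq_zero_of_natDegree_lt_card_of_eval_eq_zero' p T hevalT
      (lt_of_lt_of_le hdeg (le_trans hcard (le_of_eq hTcard.symm)))
  apply hx
  funext μ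
  have hc := congrArg (fun q => Polynomial.coeff q (μ:ℕ)) hp0
  simp only [hp, Polynomial.finset_sum_coeff, Polynomial.coeff_C_mul_X_pow,
    Polynomial.coeff_zero] at hc
  rw [Finset.sum_eq_single μ] at hc
  · simp only [if_true, eq_self_iff_true] at hc
    exact_mod_cast hc
  · intro ν _ hν
    rw [if_neg (fun e => hν (Fin.ext (by omega)))]
  · intro hμ; exact absurd (Finset.mem_univ μ) hμ

omit hN in
lemma QB_nonneg (hN : N ≠ 0) (k : ℕ) :
    0 ≤ ∑ μ : Fin r, ∑ ν : Fin r, x μ * Bmat N k r μ ν * x ν := by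
  rw [QB_eq hN]
  exact Finset.sum_nonneg fun j _ => Complex.normSq_nonneg _

omit hN in
lemma QB_lt (k : ℕ) (hx : x ≠ 0) (hkr : k + r < N) :
    ∑ μ : Fin r, ∑ ν : Fin r, x μ * Bmat N k r μ ν * x ν < N * ∑ μ, (x μ)^2 := by
  have hr1 : 0 < r := by
    rcases Nat.eq_zero_or_pos r with h0 | h
    · subst h0; exact absurd (funext fun i => i.elim0) hx
    · exact h
  have hN : N ≠ 0 := by omega
  have hNZ : (0:ℤ) < (N:ℤ) := by exact_mod_cast Nat.pos_of_ne_zero hN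
  rw [QB_eq hN]
  set G : ℕ → ℝ := fun j => Complex.normSq (F N x ((k:ℤ) - 2*j)) with hG
  set QN : ℕ → ℝ := fun m => Complex.normSq (F N x (m : ℤ)) with hQN
  set mnat : ℕ → ℕ := fun j => (((k:ℤ) - 2*j) % (N:ℤ)).toNat with hmnat
  have hmres_nonneg : ∀ j : ℕ, 0 ≤ ((k:ℤ) - 2*j) % (N:ℤ) :=
    fun j => Int.emod_nonneg _ (by exact_mod_cast hN)
  have hmres_lt : ∀ j : ℕ, ((k:ℤ) - 2*j) % (N:ℤ) < N :=
    fun j => Int.emod_lt_of_pos _ hNZ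
  have hmnat_lt : ∀ j : ℕ, mnat j < N := by
    intro j
    have h1 := hmres_nonneg j; have h2 := hmres_lt j
    simp only [hmnat]
    omega
  have hGQ : ∀ j : ℕ, G j = QN (mnat j) := by
    intro j
    rw [hG, hQN, hmnat]
    simp only
    rw [Int.toNat_of_nonneg (hmres_nonneg j)]
    congr 1
    conv_lhs => rw [← Int.emod_add_mul_ediv ((k:ℤ) - 2*j) (N:ℤ)]
    rw [F_periodic hN]
  have hdvd : ∀ j l : ℕ, mnat j = mnat l → (N:ℤ) ∣ 2*((j:ℤ) - l) := by
    intro j l hjl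
    have hres : ((k:ℤ) - 2*j) % (N:ℤ) = ((k:ℤ) - 2*l) % (N:ℤ) := by
      have := congrArg (fun t : ℕ => (t : ℤ)) hjl
      simp only [hmnat] at this
      rwa [Int.toNat_of_nonneg (hmres_nonneg j), Int.toNat_of_nonneg (hmres_nonneg l)] at this
    have h2 : (N:ℤ) ∣ ((k:ℤ) - 2*l) - ((k:ℤ) - 2*j) := Int.ModEq.dvd hres
    have he : ((k:ℤ) - 2*l) - ((k:ℤ) - 2*j) = 2*((j:ℤ) - l) := by ring
    rwa [he] at h2
  have hGnonneg : ∀ j : ℕ, 0 ≤ G j := fun j => Complex.normSq_nonneg _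
  by_cases hcase : N % 2 = 0 ∧ N / 2 ≤ k
  · -- Case B : N even, N/2 ≤ k
    obtain ⟨heven, hkn⟩ := hcase
    set n : ℕ := N / 2 with hn
    have hN2 : N = 2 * n := by omega
    have hn0 : n ≠ 0 := by omega
    have hrn : r ≤ n := by omega
    have hk1n : k + 1 - n ≤ n := by omega
    -- injectivity on range n
    have hinj : ∀ j ∈ Finset.range n, ∀ l ∈ Finset.range n, mnat j = mnat l → j = l := by
      intro j hj l hl e
      have hj' := Finset.mem_range.mp hj
      have hl' := Finset.mem_range.mp hl
      have hd := hdvd j l e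
      have habs : |2*((j:ℤ) - l)| < (N:ℤ) := by rw [abs_lt]; omega
      have := Int.eq_zero_of_abs_lt_dvd hd habs
      omega
    -- split the sum
    have hsplit : ∑ j ∈ Finset.range (k+1), G j
        = (∑ j ∈ Finset.range n, G j) + ∑ j ∈ Finset.range (k+1-n), G (n + j) := by
      have h2 : ∑ j ∈ Finset.Ico n (k+1), G j = ∑ j ∈ Finset.range (k+1-n), G (n+j) := by
        rw [Finset.sum_Ico_eq_sum_range]
      rw [Finset.range_eq_Ico,
        ← Finset.sum_Ico_consecutive G (Nat.zero_le n) (by omega : n ≤ k+1), h2,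
        ← Finset.range_eq_Ico]
    have hper : ∀ j : ℕ, G (n + j) = G j := by
      intro j
      rw [hG]
      simp only
      congr 1
      rw [show (k:ℤ) - 2*((n:ℕ) + j : ℕ) = ((k:ℤ) - 2*j) + (N:ℤ) * (-1) by push_cast [hN2]; ring,
        F_periodic hN]
    have hfirst : ∑ j ∈ Finset.range n, G j = n * ∑ μ, (x μ)^2 :=
      parseval_half x hN2 hn0 hrn k
    -- second sum
    have hsecond : ∑ j ∈ Finset.range (k+1-n), G (n + j) < n * ∑ μ, (x μ)^2 := by
      -- find j₀
      have hij : Set.InjOn mnat (Finset.Ico (k+1-n) n) := by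
        intro a ha b hb e
        exact hinj a (Finset.mem_range.mpr (Finset.mem_Ico.mp ha).2)
          b (Finset.mem_range.mpr (Finset.mem_Ico.mp hb).2) e
      have hScard : ((Finset.Ico (k+1-n) n).image mnat).card = n - (k+1-n) := by
        rw [Finset.card_image_of_injOn hij, Nat.card_Ico]
      have hcard' : r ≤ ((Finset.Ico (k+1-n) n).image mnat).card := by
        rw [hScard]; omega
      have hSsub : (Finset.Ico (k+1-n) n).image mnat ⊆ Finset.range N := by
        intro m hm
        obtain ⟨j, _, rfl⟩ := Finset.mem_image.mp hm
        exact Finset.mem_range.mpr (hmnat_lt j)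
      obtain ⟨m₀, hm₀, hFm₀⟩ := exists_F_ne x hN hx _ hSsub hcard'
      obtain ⟨j₀, hj₀, hj₀m⟩ := Finset.mem_image.mp hm₀
      have hj₀Ico := Finset.mem_Ico.mp hj₀
      have hGj₀ : 0 < G j₀ := by
        rw [hGQ j₀, hj₀m, hQN]
        exact Complex.normSq_pos.mpr hFm₀
      have hsub2 : Finset.range (k+1-n) ⊆ (Finset.range n).erase j₀ := by
        intro j hj
        have := Finset.mem_range.mp hj
        exact Finset.mem_erase.mpr ⟨by omega, Finset.mem_range.mpr (by omega)⟩
      calc ∑ j ∈ Finset.range (k+1-n), G (n + j)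
          = ∑ j ∈ Finset.range (k+1-n), G j := Finset.sum_congr rfl fun j _ => hper j
        _ ≤ ∑ j ∈ (Finset.range n).erase j₀, G j :=
            Finset.sum_le_sum_of_subset_of_nonneg hsub2 (fun j _ _ => hGnonneg j)
        _ = (∑ j ∈ Finset.range n, G j) - G j₀ :=
            Finset.sum_erase_eq_sub (Finset.mem_range.mpr hj₀Ico.2)
        _ < ∑ j ∈ Finset.range n, G j := by linarith
        _ = n * ∑ μ, (x μ)^2 := hfirst
    rw [hsplit, hfirst]
    have : (N:ℝ) = 2 * n := by exact_mod_cast hN2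
    rw [this]
    linarith
  · -- Case A
    have hinj : ∀ j ∈ Finset.range (k+1), ∀ l ∈ Finset.range (k+1), mnat j = mnat l → j = l := by
      intro j hj l hl e
      have hj' := Finset.mem_range.mp hj
      have hl' := Finset.mem_range.mp hl
      have hd := hdvd j l e
      rcases Nat.even_or_odd N with hev | hodd
      · -- N even but k < N/2, so 2k < N
        have h2k : 2 * k < N := by
          rcases hev with ⟨t, ht⟩
          omega
        have habs : |2*((j:ℤ) - l)| < (N:ℤ) := by rw [abs_lt]; omega
        have := Int.eq_zero_of_abs_lt_dvd hd habs
        omega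
      · -- N odd
        have hco : IsCoprime (N:ℤ) 2 := by
          rw [Int.isCoprime_iff_gcd_eq_one]
          have h1 : Nat.Coprime N 2 := Nat.coprime_two_right.mpr hodd
          simpa [Int.gcd] using h1
        have hd2 : (N:ℤ) ∣ ((j:ℤ) - l) * 2 := by rwa [mul_comm] at hd
        have hd3 : (N:ℤ) ∣ ((j:ℤ) - l) := hco.dvd_of_dvd_mul_right hd2
        have hkN : k < N := by omega
        have habs : |(j:ℤ) - l| < (N:ℤ) := by rw [abs_lt]; omega
        have := Int.eq_zero_of_abs_lt_dvd hd3 habs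
        omega
    have hij : Set.InjOn mnat (Finset.range (k+1)) := fun a ha b hb e => hinj a ha b hb e
    have hScard : ((Finset.range (k+1)).image mnat).card = k+1 := by
      rw [Finset.card_image_of_injOn hij, Finset.card_range]
    have hSsub : (Finset.range (k+1)).image mnat ⊆ Finset.range N := by
      intro m hm
      obtain ⟨j, _, rfl⟩ := Finset.mem_image.mp hm
      exact Finset.mem_range.mpr (hmnat_lt j)
    have hcard' : r ≤ (Finset.range N \ (Finset.range (k+1)).image mnat).card := by
      rw [Finset.card_sdiff_of_subset hSsub, Finset.card_range, hScard]; omega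
    obtain ⟨m₀, hm₀, hFm₀⟩ := exists_F_ne x hN hx _ (Finset.sdiff_subset) hcard'
    have hm₀' := Finset.mem_sdiff.mp hm₀
    calc ∑ j ∈ Finset.range (k+1), G j
        = ∑ j ∈ Finset.range (k+1), QN (mnat j) := Finset.sum_congr rfl fun j _ => hGQ j
      _ = ∑ m ∈ (Finset.range (k+1)).image mnat, QN m := (Finset.sum_image hinj).symm
      _ ≤ ∑ m ∈ (Finset.range N).erase m₀, QN m := by
          refine Finset.sum_le_sum_of_subset_of_nonneg ?_
            (fun m _ _ => Complex.normSq_nonneg _)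
          intro m hm
          exact Finset.mem_erase.mpr ⟨fun e => hm₀'.2 (e ▸ hm), hSsub hm⟩
      _ = (∑ m ∈ Finset.range N, QN m) - QN m₀ := Finset.sum_erase_eq_sub hm₀'.1
      _ < ∑ m ∈ Finset.range N, QN m := by
          have : 0 < QN m₀ := Complex.normSq_pos.mpr hFm₀
          linarith
      _ = N * ∑ μ, (x μ)^2 := parseval_full hN x (by omega)

end AmatCore

theorem Amat_posDef_of_lt (η : ℝ → ℝ) (τ : ℝ) (hτ : 0 < τ) (hτ1 : τ < 1)
    (hη1 : ∀ t ∈ Set.Icc 0 τ, η t = 1)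
    (hη01 : ∀ t : ℝ, 0 ≤ t → 0 ≤ η t ∧ η t ≤ 1)
    (hηdec : StrictAntiOn η (Set.Icc τ 1))
    (N k r : ℕ) (hk : k ≤ N - 1) (hr : r ≤ N - 1) (h : k + r < N) :
    (Amat η N k r).PosDef ∧
      ∀ μ ∈ spectrum ℝ (Amat η N k r), μ ∈ Set.Ioc (0 : ℝ) 1 := by
  have hN : N ≠ 0 := by omega
  have hNpos : (0:ℝ) < N := by exact_mod_cast Nat.pos_of_ne_zero hN
  set c : ℝ := η ((k : ℝ) / N) with hcdef
  obtain ⟨hc0, hc1⟩ := hη01 ((k : ℝ) / N) (by positivity)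
  have hA : Amat η N k r = 1 - (c * (N:ℝ)⁻¹) • Bmat N k r := by
    rw [Amat, Mmat, sub_sub_cancel, smul_smul]
  have hBsym : ∀ μ ν : Fin r, Bmat N k r μ ν = Bmat N k r ν μ := by
    intro μ ν
    show chebU k (Real.cos (2 * π * ((μ : ℝ) - (ν : ℝ)) / N))
      = chebU k (Real.cos (2 * π * ((ν : ℝ) - (μ : ℝ)) / N))
    rw [show 2 * π * ((ν : ℝ) - (μ : ℝ)) / N = -(2 * π * ((μ : ℝ) - (ν : ℝ)) / N) by ring,
      Real.cos_neg]
  have hherm : (Amat η N k r).IsHermitian := by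
    show (Amat η N k r).conjTranspose = Amat η N k r
    ext i j
    simp only [Matrix.conjTranspose_apply, hA, Matrix.sub_apply, Matrix.smul_apply,
      Matrix.one_apply, star_trivial, smul_eq_mul]
    rw [hBsym j i]
    congr 1
    by_cases hij : i = j
    · subst hij; rfl
    · rw [if_neg hij, if_neg (Ne.symm hij)]
  have hquad : ∀ y : Fin r → ℝ, dotProduct y ((Amat η N k r).mulVec y)
      = (∑ i, (y i)^2) - (c * (N:ℝ)⁻¹) * ∑ μ, ∑ ν, y μ * Bmat N k r μ ν * y ν := by
    intro y
    rw [hA, Matrix.sub_mulVec, Matrix.one_mulVec, Matrix.smul_mulVec, dotProduct_sub,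
      dotProduct_smul, smul_eq_mul]
    congr 1
    · simp [dotProduct, sq]
    · congr 1
      simp [Matrix.mulVec, dotProduct, Finset.mul_sum, mul_assoc]
  have hkey : ∀ y : Fin r → ℝ, y ≠ 0 →
      (0 < dotProduct y ((Amat η N k r).mulVec y)) ∧ dotProduct y ((Amat η N k r).mulVec y) ≤ ∑ i, (y i)^2 := by
    intro y hy
    have hq0 := AmatCore.QB_nonneg y hN k
    have hqlt := AmatCore.QB_lt y k hy h
    set q : ℝ := ∑ μ, ∑ ν, y μ * Bmat N k r μ ν * y ν with hqdef
    have ht0 : 0 ≤ c * (N:ℝ)⁻¹ * q := by positivity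
    have ht1 : c * (N:ℝ)⁻¹ * q < ∑ i, (y i)^2 := by
      have h1 : c * (N:ℝ)⁻¹ * q ≤ (N:ℝ)⁻¹ * q := by
        have : 0 ≤ (N:ℝ)⁻¹ * q := by positivity
        nlinarith
      have h2 : (N:ℝ)⁻¹ * q < ∑ i, (y i)^2 := by
        have h3 : (N:ℝ)⁻¹ * q < (N:ℝ)⁻¹ * ((N:ℝ) * ∑ i, (y i)^2) := by
          apply mul_lt_mul_of_pos_left hqlt (by positivity)
        rwa [← mul_assoc, inv_mul_cancel₀ (ne_of_gt hNpos), one_mul] at h3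
      linarith
    rw [hquad y]
    constructor <;> linarith
  constructor
  · exact Matrix.posDef_iff_dotProduct_mulVec.mpr ⟨hherm, fun y hy => by
      have := (hkey y hy).1
      simpa [star_trivial] using this⟩
  · intro μval hμ
    rw [spectrum.mem_iff, Algebra.algebraMap_eq_smul_one] at hμ
    have hdet : (μval • (1 : Matrix (Fin r) (Fin r) ℝ) - Amat η N k r).det = 0 := by
      by_contra hd
      exact hμ ((Matrix.isUnit_iff_isUnit_det _).mpr (isUnit_iff_ne_zero.mpr hd))
    obtain ⟨v, hv0, hv⟩ := (Matrix.exists_mulVec_eq_zero_iff).mpr hdet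
    have hAv : (Amat η N k r).mulVec v = μval • v := by
      rw [Matrix.sub_mulVec, Matrix.smul_mulVec, Matrix.one_mulVec, sub_eq_zero] at hv
      exact hv.symm
    have hvv : 0 < ∑ i, (v i)^2 := by
      obtain ⟨i, hi⟩ := Function.ne_iff.mp hv0
      refine Finset.sum_pos' (fun j _ => sq_nonneg _) ⟨i, Finset.mem_univ i, ?_⟩
      have : v i ≠ 0 := hi
      positivity
    have hdot : dotProduct v ((Amat η N k r).mulVec v) = μval * ∑ i, (v i)^2 := by
      rw [hAv, dotProduct_smul, smul_eq_mul]
      congr 1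
      simp [dotProduct, sq]
    obtain ⟨hpos, hle⟩ := hkey v hv0
    rw [hdot] at hpos hle
    constructor
    · nlinarith
    · nlinarith
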